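/- Appeal-judgment correctness: with a sound Merkle verification (injective hashes) and correct encryption schemes, the consumer's appeal against the service provider succeeds if and only if the service provider delivered a wrong block: letting K = Dec_{Pri_cm}(Enc_{Pub_cm}(K_sp)) and D' = Dec^AES_K(c) for delivered ciphertext c, the contract's check Mvrfy(i, r_ed, D', P_ed) fails iff c ≠ Enc^AES_{K_sp}(Dᵢ), where Dᵢ is the i-th block committed under root r_ed. -/

import Mathlib

/-- A perfect binary tree of depth `k` with data blocks at the leaves. -/
inductive PTree (β : Type) : ℕ → Type
  | leaf : β → PTree β 0
  | node : {k : ℕ} → PTree β k → PTree β k → PTree β (k + 1)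

variable {α β : Type}

/-- The Merkle root of a tree: leaves are hashed with `h₀`, internal nodes with `h`. -/
def PTree.root (h : α → α → α) (h₀ : β → α) : {k : ℕ} → PTree β k → α
  | 0, .leaf b => h₀ b
  | _ + 1, .node l r => h (l.root h h₀) (r.root h h₀)

/-- `Mtree`: build the perfect Merkle tree on the `2^k` data blocks indexed by
bit-paths `Fin k → Bool` (`false` = left, `true` = right). -/
def Mtree : (k : ℕ) → ((Fin k → Bool) → β) → PTree β k
  | 0, f => .leaf (f (fun j => j.elim0))
  | k + 1, f =>
      .node (Mtree k (fun q => f (Fin.cons false q))) (Mtree k (fun q => f (Fin.cons true q)))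

/-- `Mproof`: the authentication path (list of sibling hashes, root-to-leaf) for the
leaf at bit-path `p`. -/
def Mproof (h : α → α → α) (h₀ : β → α) : {k : ℕ} → PTree β k → (Fin k → Bool) → List α
  | 0, .leaf _, _ => []
  | _ + 1, .node l r, p =>
      if p 0 then l.root h h₀ :: Mproof h h₀ r (fun j => p j.succ)
      else r.root h h₀ :: Mproof h h₀ l (fun j => p j.succ)

/-- Recompute the candidate root from a leaf hash `cur`, combining with the sibling
hashes in `π` on the side determined by the bits of the index. -/
def computeRoot (h : α → α → α) : List Bool → List α → α → α
  | b :: bs, s :: ss, cur =>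
      if b then h s (computeRoot h bs ss cur) else h (computeRoot h bs ss cur) s
  | _, _, cur => cur

/-- `Mvrfy i r x π`: verification succeeds iff recomputing the root from `h₀ x` along
the authentication path `π` (sides given by the bits of `i`) yields `r`. -/
def Mvrfy (h : α → α → α) (h₀ : β → α) (i : List Bool) (r : α) (x : β) (π : List α) : Prop :=
  π.length = i.length ∧ computeRoot h i π (h₀ x) = r

/-- Appeal-judgment correctness: with injective hashes (sound Merkle verification) and
correct encryption schemes (the symmetric cipher being a correct, hence bijective,
scheme), the contract's appeal check against the committed root `r_ed` of the encrypted
blocks fails exactly when the service provider delivered a wrong ciphertext: letting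
`K = DecA pri (EncA pub K_sp)` and `D' = DecS K c`, verification of `D'` at index `i`
with the honest proof `P_ed` fails iff `c ≠ EncS K_sp (D i)`. -/

theorem mproof_length (h : α → α → α) (h₀ : β → α) :
    ∀ {k : ℕ} (D : (Fin k → Bool) → β) (i : Fin k → Bool),
      (Mproof h h₀ (Mtree k D) i).length = k := by
  intro k
  induction k with
  | zero => intro D i; rfl
  | succ k ih =>
    intro D i
    by_cases hb : i 0 = true <;> simp [Mtree, Mproof, hb, ih]

theorem computeRoot_iff (h : α → α → α) (h₀ : β → α)
    (hinj : ∀ u v u' v' : α, h u v = h u' v' → u = u' ∧ v = v')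
    (h₀inj : Function.Injective h₀) :
    ∀ {k : ℕ} (D : (Fin k → Bool) → β) (i : Fin k → Bool) (x : β),
      computeRoot h (List.ofFn i) (Mproof h h₀ (Mtree k D) i) (h₀ x)
        = (Mtree k D).root h h₀ ↔ x = D i := by
  intro k
  induction k with
  | zero =>
    intro D i x
    have hi : i = fun j => j.elim0 := funext fun j => j.elim0
    subst hi
    simp [Mtree, Mproof, PTree.root, computeRoot]
    exact ⟨fun hx => h₀inj hx, fun hx => by rw [hx]⟩
  | succ k ih =>
    intro D i x
    have hcons : D (Fin.cons (i 0) (fun j => i j.succ)) = D i := by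
      congr 1
      exact Fin.cons_self_tail i
    by_cases hb : i 0 = true
    · rw [List.ofFn_succ]
      simp only [Mtree, Mproof, PTree.root, hb, if_true, computeRoot]
      constructor
      · intro hr
        have := hinj _ _ _ _ hr
        rw [← hcons, hb]
        exact (ih _ (fun j => i j.succ) x).mp this.2
      · intro hx
        have := (ih (fun q => D (Fin.cons true q)) (fun j => i j.succ) x).mpr
          (by rw [hx, ← hcons, hb])
        rw [this]
    · rw [List.ofFn_succ]
      simp only [Mtree, Mproof, PTree.root, hb, if_false, computeRoot]
      rw [Bool.not_eq_true] at hb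
      constructor
      · intro hr
        have := hinj _ _ _ _ hr
        rw [← hcons, hb]
        exact (ih _ (fun j => i j.succ) x).mp this.1
      · intro hx
        have := (ih (fun q => D (Fin.cons false q)) (fun j => i j.succ) x).mpr
          (by rw [hx, ← hcons, hb])
        simp only [Bool.false_eq_true, ite_false, computeRoot]
        rw [this]

theorem appeal_judgment_correct {Key KeyCipher PubKey PriKey : Type}
    (h : α → α → α) (h₀ : β → α)
    (hinj : ∀ u v u' v' : α, h u v = h u' v' → u = u' ∧ v = v')
    (h₀inj : Function.Injective h₀)
    (EncS : Key → β → β) (DecS : Key → β → β)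
    (EncA : PubKey → Key → KeyCipher) (DecA : PriKey → KeyCipher → Key)
    (pub : PubKey) (pri : PriKey)
    (hSymDec : ∀ (K : Key) (m : β), DecS K (EncS K m) = m)
    (hSymEnc : ∀ (K : Key) (c : β), EncS K (DecS K c) = c)
    (hSymInj : ∀ K : Key, Function.Injective (EncS K))
    (hAsym : ∀ K : Key, DecA pri (EncA pub K) = K)
    (k : ℕ) (D : (Fin k → Bool) → β) (i : Fin k → Bool) (K_sp : Key) (c : β) :
    ¬ Mvrfy h h₀ (List.ofFn i) ((Mtree k D).root h h₀)
        (DecS (DecA pri (EncA pub K_sp)) c) (Mproof h h₀ (Mtree k D) i) ↔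
      c ≠ EncS K_sp (D i) := by
  rw [hAsym]
  have hm : Mvrfy h h₀ (List.ofFn i) ((Mtree k D).root h h₀) (DecS K_sp c)
      (Mproof h h₀ (Mtree k D) i) ↔ DecS K_sp c = D i := by
    unfold Mvrfy
    rw [mproof_length h h₀ D i, List.length_ofFn]
    simp [computeRoot_iff h h₀ hinj h₀inj D i]
  rw [hm]
  constructor
  · intro hne hc
    exact hne (by rw [hc, hSymDec])
  · intro hne hd
    exact hne (by rw [← hd, hSymEnc])
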